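/- Let m ≥ 1 and let 𝕋[[t_1,…,t_m]] denote the set of vertex sets, i.e. the image of the operator Vert on P(ℤ_{≥0}^m) (equivalently, the sets X ⊆ ℤ_{≥0}^m with Vert(X) = X). With the operations S ⊕ T = Vert(S ∪ T) and S ⊙ T = Vert(S + T), the set 𝕋[[t_1,…,t_m]] is a commutative idempotent semiring: ⊕ and ⊙ are commutative and associative, ⊙ distributes over ⊕, S ⊕ S = S for all S, the empty set ∅ is the neutral element for ⊕ and absorbing for ⊙ (∅ ⊙ S = ∅), and the singleton {(0,…,0)} is the neutral element for ⊙. -/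

import Mathlib

open Pointwise Set

noncomputable section

/-- The embedding of `ℤ_{≥0}^m` into `ℝ^m`. -/
def emb {m : ℕ} (x : Fin m → ℕ) : Fin m → ℝ := fun i => (x i : ℝ)

/-- The Newton polygon of `X ⊆ ℤ_{≥0}^m`: the convex hull (in `ℝ^m`) of
`X + ℤ_{≥0}^m`. -/
def newton {m : ℕ} (X : Set (Fin m → ℕ)) : Set (Fin m → ℝ) :=
  convexHull ℝ (emb '' (X + (Set.univ : Set (Fin m → ℕ))))

/-- The vertex set of `X`: the elements `x ∈ X` with `x ∉ N(X \ {x})`. -/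
def vert {m : ℕ} (X : Set (Fin m → ℕ)) : Set (Fin m → ℕ) :=
  {x ∈ X | emb x ∉ newton (X \ {x})}

/-- Tropical sum of supports. -/
def oplus {m : ℕ} (S T : Set (Fin m → ℕ)) : Set (Fin m → ℕ) := vert (S ∪ T)

/-- Tropical product of supports (via Minkowski sum). -/
def odot {m : ℕ} (S T : Set (Fin m → ℕ)) : Set (Fin m → ℕ) := vert (S + T)

/-- A vertex set (tropical formal power series) is a set in the image of `vert`,
equivalently a fixed point of `vert`. -/
def IsVertexSet {m : ℕ} (S : Set (Fin m → ℕ)) : Prop := vert S = S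

variable {m : ℕ}

/-- The nonnegative orthant. -/
def orth (m : ℕ) : Set (Fin m → ℝ) := {c | ∀ i, 0 ≤ c i}

lemma orth_convex : Convex ℝ (orth m) := by
  intro a ha b hb s t hs ht _
  intro i
  exact add_nonneg (mul_nonneg hs (ha i)) (mul_nonneg ht (hb i))

lemma zero_mem_orth : (0 : Fin m → ℝ) ∈ orth m := fun i => le_refl 0

lemma orth_add {a b : Fin m → ℝ} (ha : a ∈ orth m) (hb : b ∈ orth m) : a + b ∈ orth m :=
  fun i => add_nonneg (ha i) (hb i)

lemma orth_smul {t : ℝ} {a : Fin m → ℝ} (ht : 0 ≤ t) (ha : a ∈ orth m) : t • a ∈ orth m :=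
  fun i => mul_nonneg ht (ha i)

lemma emb_add (x y : Fin m → ℕ) : emb (x + y) = emb x + emb y := by
  funext i; simp [emb]

lemma emb_inj : Function.Injective (emb (m := m)) := by
  intro x y h
  funext i
  exact Nat.cast_injective (congrFun h i)

lemma emb_image_add (A B : Set (Fin m → ℕ)) : emb '' (A + B) = emb '' A + emb '' B := by
  ext u
  constructor
  · rintro ⟨x, ⟨a, ha, b, hb, rfl⟩, rfl⟩
    exact ⟨emb a, ⟨a, ha, rfl⟩, emb b, ⟨b, hb, rfl⟩, (emb_add a b).symm⟩
  · rintro ⟨-, ⟨a, ha, rfl⟩, -, ⟨b, hb, rfl⟩, rfl⟩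
    exact ⟨a + b, ⟨a, ha, b, hb, rfl⟩, emb_add a b⟩

lemma convexHull_emb_univ : convexHull ℝ (emb '' (univ : Set (Fin m → ℕ))) = orth m := by
  apply Subset.antisymm
  · apply convexHull_min _ orth_convex
    rintro - ⟨x, -, rfl⟩ i
    exact Nat.cast_nonneg (x i)
  · intro c hc
    have himg : emb '' (univ : Set (Fin m → ℕ)) =
        Set.pi univ (fun _ : Fin m => Set.range ((↑) : ℕ → ℝ)) := by
      ext f
      constructor
      · rintro ⟨x, -, rfl⟩ i -
        exact ⟨x i, rfl⟩
      · intro hf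
        choose g hg using fun i => hf i (mem_univ i)
        exact ⟨g, mem_univ _, funext fun i => hg i⟩
    rw [himg]
    apply mem_convexHull_pi
    intro i _
    have h1 : (⌊c i⌋₊ : ℝ) ≤ c i := Nat.floor_le (hc i)
    have h2 : c i ≤ (⌊c i⌋₊ + 1 : ℕ) := by
      push_cast
      exact (Nat.lt_floor_add_one (c i)).le
    have : c i ∈ segment ℝ ((⌊c i⌋₊ : ℕ) : ℝ) ((⌊c i⌋₊ + 1 : ℕ) : ℝ) := by
      rw [segment_eq_Icc (by push_cast; linarith)]
      exact ⟨h1, h2⟩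
    have hsub : segment ℝ ((⌊c i⌋₊ : ℕ) : ℝ) ((⌊c i⌋₊ + 1 : ℕ) : ℝ) ⊆
        convexHull ℝ (Set.range ((↑) : ℕ → ℝ)) := by
      rw [← convexHull_pair]
      exact convexHull_mono (by rintro x (rfl | rfl) <;> exact ⟨_, rfl⟩)
    exact hsub this

lemma newton_eq (X : Set (Fin m → ℕ)) :
    newton X = convexHull ℝ (emb '' X) + orth m := by
  rw [newton, emb_image_add, convexHull_add, convexHull_emb_univ]

lemma newton_convex (X : Set (Fin m → ℕ)) : Convex ℝ (newton X) :=
  convex_convexHull ℝ _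

lemma newton_add_orth {X : Set (Fin m → ℕ)} {u c : Fin m → ℝ}
    (hu : u ∈ newton X) (hc : c ∈ orth m) : u + c ∈ newton X := by
  rw [newton_eq] at hu ⊢
  obtain ⟨a, ha, b, hb, rfl⟩ := hu
  exact ⟨a, ha, b + c, orth_add hb hc, (add_assoc a b c).symm⟩

lemma subset_newton (X : Set (Fin m → ℕ)) : emb '' X ⊆ newton X := by
  rintro - ⟨x, hx, rfl⟩
  apply subset_convexHull
  exact ⟨x, ⟨x, hx, 0, mem_univ 0, (add_zero x)⟩, rfl⟩

lemma newton_mono {X Y : Set (Fin m → ℕ)} (h : X ⊆ Y) : newton X ⊆ newton Y :=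
  convexHull_mono (image_mono (add_subset_add_right h))

lemma newton_union (A B : Set (Fin m → ℕ)) :
    newton (A ∪ B) = convexHull ℝ (newton A ∪ newton B) := by
  rw [newton_eq A, newton_eq B, ← Set.union_add, convexHull_add,
    Convex.convexHull_eq orth_convex, convexHull_convexHull_union_left,
    convexHull_convexHull_union_right, newton_eq, image_union]

lemma newton_addset (A B : Set (Fin m → ℕ)) :
    newton (A + B) = newton A + newton B := by
  have horth : orth m + orth m = orth m := by
    apply Subset.antisymm
    · rintro - ⟨a, ha, b, hb, rfl⟩; exact orth_add ha hb
    · intro a ha; exact ⟨a, ha, 0, zero_mem_orth, (add_zero a)⟩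
  rw [newton_eq A, newton_eq B, newton_eq (A + B), emb_image_add, convexHull_add]
  rw [add_add_add_comm, horth, add_assoc]

lemma newton_empty : newton (∅ : Set (Fin m → ℕ)) = ∅ := by
  simp [newton]
lemma emb_nonneg (a : Fin m → ℕ) : ∀ i, 0 ≤ emb a i := fun i => Nat.cast_nonneg _

/-- A lattice point that is a proper shift of a point of `X` is not extreme. -/
lemma not_ext_of_shift {X : Set (Fin m → ℕ)} {y a : Fin m → ℕ} (hy : y ∈ X) (ha : a ≠ 0) :
    emb (y + a) ∉ extremePoints ℝ (newton X) := by
  intro hext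
  have hy' : emb y ∈ newton X := subset_newton X ⟨y, hy, rfl⟩
  have hq : emb (y + a + a) ∈ newton X := by
    rw [emb_add, emb_add]
    rw [add_assoc]
    exact newton_add_orth hy' (fun i => add_nonneg (emb_nonneg a i) (emb_nonneg a i))
  have hseg : emb (y + a) ∈ openSegment ℝ (emb y) (emb (y + a + a)) := by
    refine ⟨1/2, 1/2, by norm_num, by norm_num, by norm_num, ?_⟩
    simp only [emb_add]
    funext i
    simp only [Pi.add_apply, Pi.smul_apply, smul_eq_mul]
    ring
  have h1 : emb y = emb (y + a) := hext.2 hy' hq hseg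
  have : y = y + a := emb_inj h1
  exact ha (by simpa using this.symm)

lemma mem_of_extremePoint {X : Set (Fin m → ℕ)} {x : Fin m → ℕ}
    (h : emb x ∈ extremePoints ℝ (newton X)) : x ∈ X := by
  have hmem : emb x ∈ emb '' (X + (univ : Set (Fin m → ℕ))) :=
    extremePoints_convexHull_subset h
  obtain ⟨z, hz, hzx⟩ := hmem
  obtain rfl : z = x := emb_inj hzx
  obtain ⟨y, hy, a, -, rfl⟩ := hz
  by_cases ha : a = 0
  · subst ha; simpa using hy
  · exact absurd h (not_ext_of_shift hy ha)

lemma extremePoint_restrict {A B : Set (Fin m → ℝ)} {x : Fin m → ℝ}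
    (h : x ∈ extremePoints ℝ A) (hx : x ∈ B) (hBA : B ⊆ A) : x ∈ extremePoints ℝ B :=
  ⟨hx, fun _ hp _ hq ho => h.2 (hBA hp) (hBA hq) ho⟩

/-- The key characterization: `vert X` is the preimage of the extreme points of `N(X)`. -/
lemma vert_eq_ext (X : Set (Fin m → ℕ)) :
    vert X = {x | emb x ∈ extremePoints ℝ (newton X)} := by
  ext x
  constructor
  · rintro ⟨hx, hnot⟩
    refine ⟨subset_newton X ⟨x, hx, rfl⟩, ?_⟩
    intro p hp q hq hseg
    obtain ⟨t₁, t₂, ht₁, ht₂, hsum, heq⟩ := hseg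
    -- decompose `newton X` as the join of `B := newton (X \ {x})` and `emb x + orth`
    set B := newton (X \ {x}) with hB
    have hXsplit : X = (X \ {x}) ∪ {x} := by
      rw [Set.diff_union_self, Set.union_eq_self_of_subset_right (by simpa using hx)]
    have hC : convexHull ℝ (emb '' ({x} + (univ : Set (Fin m → ℕ))))
        = {u | ∃ c : Fin m → ℝ, (∀ i, 0 ≤ c i) ∧ u = emb x + c} := by
      have : emb '' ({x} + (univ : Set (Fin m → ℕ)))
          = {emb x} + emb '' (univ : Set (Fin m → ℕ)) := by
        rw [emb_image_add, Set.image_singleton]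
      rw [this, convexHull_add, convexHull_singleton, convexHull_emb_univ]
      ext u
      constructor
      · rintro ⟨e, he, c, hc, rfl⟩
        obtain rfl : e = emb x := he
        exact ⟨c, hc, rfl⟩
      · rintro ⟨c, hc, rfl⟩
        exact ⟨emb x, rfl, c, hc, rfl⟩
    have key0 : ∀ c₁ c₂ : Fin m → ℝ, (∀ i, 0 ≤ c₁ i) → (∀ i, 0 ≤ c₂ i) →
        t₁ • (emb x + c₁) + t₂ • (emb x + c₂) = emb x → c₁ = 0 ∧ c₂ = 0 := by
      intro c₁ c₂ h1 h2 heq'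
      have hz : ∀ i, t₁ * c₁ i + t₂ * c₂ i = 0 := by
        intro i
        have hco := congrFun heq' i
        simp only [Pi.add_apply, Pi.smul_apply, smul_eq_mul] at hco
        linear_combination hco - emb x i * hsum
      constructor
      · funext i
        have h0 : t₁ * c₁ i = 0 := by
          nlinarith [mul_nonneg ht₁.le (h1 i), mul_nonneg ht₂.le (h2 i), hz i]
        have := mul_eq_zero.mp h0
        simpa [ht₁.ne'] using this
      · funext i
        have h0 : t₂ * c₂ i = 0 := by
          nlinarith [mul_nonneg ht₁.le (h1 i), mul_nonneg ht₂.le (h2 i), hz i]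
        have := mul_eq_zero.mp h0
        simpa [ht₂.ne'] using this
    have hNX : newton X = convexHull ℝ
        (emb '' ((X \ {x}) + (univ : Set (Fin m → ℕ))) ∪ emb '' ({x} + (univ : Set (Fin m → ℕ)))) := by
      have hsplit2 : X + (univ : Set (Fin m → ℕ))
          = ((X \ {x}) + univ) ∪ ({x} + univ) := by
        conv_lhs => rw [hXsplit]
        rw [Set.union_add]
      rw [newton, hsplit2, image_union]
    by_cases hne : (X \ {x}).Nonempty
    · -- the join case
      obtain ⟨y, hy⟩ := hne
      have hS1ne : (emb '' ((X \ {x}) + (univ : Set (Fin m → ℕ)))).Nonempty :=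
        ⟨emb (y + 0), ⟨y + 0, ⟨y, hy, 0, mem_univ _, rfl⟩, rfl⟩⟩
      have hS2ne : (emb '' ({x} + (univ : Set (Fin m → ℕ)))).Nonempty :=
        ⟨emb (x + 0), ⟨x + 0, ⟨x, rfl, 0, mem_univ _, rfl⟩, rfl⟩⟩
      rw [hNX, convexHull_union hS1ne hS2ne] at hp hq
      rw [mem_convexJoin] at hp hq
      obtain ⟨b₁, hb₁, c₁', hc₁', hpseg⟩ := hp
      obtain ⟨b₂, hb₂, c₂', hc₂', hqseg⟩ := hq
      rw [hC] at hc₁' hc₂'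
      obtain ⟨a₁, ha₁, rfl⟩ := hc₁'
      obtain ⟨a₂, ha₂, rfl⟩ := hc₂'
      obtain ⟨u₁, v₁, hu₁, hv₁, huv₁, hp_eq⟩ := hpseg
      obtain ⟨u₂, v₂, hu₂, hv₂, huv₂, hq_eq⟩ := hqseg
      rw [← hp_eq, ← hq_eq] at heq
      rw [← hp_eq]
      have hb₁' : b₁ ∈ B := hb₁
      have hb₂' : b₂ ∈ B := hb₂
      by_cases hβ : t₁ * u₁ + t₂ * u₂ = 0
      · have hu₁0 : u₁ = 0 := by
          have h0 : t₁ * u₁ = 0 := by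
            nlinarith [mul_nonneg ht₁.le hu₁, mul_nonneg ht₂.le hu₂]
          simpa [ht₁.ne'] using mul_eq_zero.mp h0
        have hu₂0 : u₂ = 0 := by
          have h0 : t₂ * u₂ = 0 := by
            nlinarith [mul_nonneg ht₁.le hu₁, mul_nonneg ht₂.le hu₂]
          simpa [ht₂.ne'] using mul_eq_zero.mp h0
        have hv₁1 : v₁ = 1 := by linarith
        have hv₂1 : v₂ = 1 := by linarith
        subst hu₁0 hu₂0 hv₁1 hv₂1
        simp only [zero_smul, one_smul, zero_add] at heq ⊢
        obtain ⟨hA1, hA2⟩ := key0 a₁ a₂ ha₁ ha₂ heq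
        subst hA1; subst hA2
        simp
      · exfalso
        have hβpos : 0 < t₁ * u₁ + t₂ * u₂ :=
          lt_of_le_of_ne (by positivity) (Ne.symm hβ)
        set β := t₁ * u₁ + t₂ * u₂ with hβdef
        have hbstar : (β⁻¹ * (t₁ * u₁)) • b₁ + (β⁻¹ * (t₂ * u₂)) • b₂ ∈ B := by
          refine newton_convex (X \ {x}) hb₁' hb₂' ?_ ?_ ?_
          · positivity
          · positivity
          · field_simp
            exact hβdef.symm
        have hvec : β • emb x = ((t₁ * u₁) • b₁ + (t₂ * u₂) • b₂)
            + (t₁ • (v₁ • a₁) + t₂ • (v₂ • a₂)) := by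
          funext i
          have hco := congrFun heq i
          simp only [Pi.add_apply, Pi.smul_apply, smul_eq_mul] at hco ⊢
          linear_combination emb x i * hβdef - hco + (emb x i * t₁) * huv₁
            + (emb x i * t₂) * huv₂ + emb x i * hsum
        have h2 : emb x = β⁻¹ • (β • emb x) := (inv_smul_smul₀ hβ _).symm
        rw [hvec, smul_add, smul_add, smul_smul, smul_smul] at h2
        apply hnot
        rw [h2]
        refine newton_add_orth hbstar (fun i => ?_)
        have h3 : 0 ≤ t₁ * (v₁ * a₁ i) + t₂ * (v₂ * a₂ i) :=
          add_nonneg (mul_nonneg ht₁.le (mul_nonneg hv₁ (ha₁ i)))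
            (mul_nonneg ht₂.le (mul_nonneg hv₂ (ha₂ i)))
        simpa [Pi.smul_apply, smul_eq_mul, mul_assoc] using
          mul_nonneg (inv_nonneg.mpr hβpos.le) h3
    · -- X = {x}
      have hX1 : X = {x} := by
        rw [hXsplit, not_nonempty_iff_eq_empty.mp hne, empty_union]
      have hNC : newton X = {u | ∃ c : Fin m → ℝ, (∀ i, 0 ≤ c i) ∧ u = emb x + c} := by
        rw [hX1]; exact hC
      rw [hNC] at hp hq
      obtain ⟨a₁, ha₁, rfl⟩ := hp
      obtain ⟨a₂, ha₂, rfl⟩ := hq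
      obtain ⟨hA1, hA2⟩ := key0 a₁ a₂ ha₁ ha₂ heq
      subst hA1; subst hA2
      simp
  · intro h
    have hx : x ∈ X := mem_of_extremePoint h
    refine ⟨hx, fun hmem => ?_⟩
    have h2 : emb x ∈ extremePoints ℝ (newton (X \ {x})) :=
      extremePoint_restrict h hmem (newton_mono diff_subset)
    have : x ∈ X \ {x} := mem_of_extremePoint h2
    exact this.2 rfl
lemma vert_subset (X : Set (Fin m → ℕ)) : vert X ⊆ X := fun _ h => h.1

lemma vert_congr {X Y : Set (Fin m → ℕ)} (h : newton X = newton Y) : vert X = vert Y := by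
  rw [vert_eq_ext, vert_eq_ext, h]

lemma newton_erase {X : Set (Fin m → ℕ)} {x : Fin m → ℕ} (hx : x ∈ X)
    (h : emb x ∈ newton (X \ {x})) : newton X = newton (X \ {x}) := by
  refine Subset.antisymm ?_ (newton_mono diff_subset)
  have himg : emb '' X ⊆ newton (X \ {x}) := by
    rintro - ⟨y, hy, rfl⟩
    by_cases hyx : y = x
    · subst hyx; exact h
    · exact subset_newton _ ⟨y, ⟨hy, hyx⟩, rfl⟩
  intro u hu
  rw [newton_eq] at hu
  obtain ⟨a, ha, c, hc, rfl⟩ := hu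
  exact newton_add_orth (convexHull_min himg (newton_convex _) ha) hc

lemma newton_vert_finset (F : Finset (Fin m → ℕ)) :
    newton (vert (↑F : Set (Fin m → ℕ))) = newton (↑F : Set (Fin m → ℕ)) := by
  induction F using Finset.strongInductionOn with
  | _ F ih =>
    by_cases hfix : vert (↑F : Set (Fin m → ℕ)) = ↑F
    · rw [hfix]
    · have hns : ¬ (↑F : Set (Fin m → ℕ)) ⊆ vert ↑F :=
        fun h => hfix (Subset.antisymm (vert_subset _) h)
      obtain ⟨x, hxF, hxv⟩ := not_subset.mp hns
      have hmem : emb x ∈ newton ((↑F : Set (Fin m → ℕ)) \ {x}) := by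
        by_contra h
        exact hxv ⟨hxF, h⟩
      have hNe : newton (↑F : Set (Fin m → ℕ)) = newton ((↑F : Set (Fin m → ℕ)) \ {x}) :=
        newton_erase hxF hmem
      have hcast : (↑(F.erase x) : Set (Fin m → ℕ)) = (↑F : Set (Fin m → ℕ)) \ {x} :=
        Finset.coe_erase x F
      have hxF' : x ∈ F := hxF
      have hss : F.erase x ⊂ F := Finset.erase_ssubset hxF'
      have hIH := ih (F.erase x) hss
      have hv : vert (↑F : Set (Fin m → ℕ)) = vert (↑(F.erase x) : Set (Fin m → ℕ)) :=
        vert_congr (by rw [hcast, ← hNe])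
      rw [hv, hIH, hcast, ← hNe]

lemma exists_min (X : Set (Fin m → ℕ)) :
    ∀ (n : ℕ) (x : Fin m → ℕ), x ∈ X → (∑ i, x i) = n →
      ∃ y ∈ X, y ≤ x ∧ ∀ z ∈ X, z ≤ y → z = y := by
  intro n
  induction n using Nat.strong_induction_on with
  | _ n ih =>
    intro x hx hsum
    by_cases hminx : ∀ z ∈ X, z ≤ x → z = x
    · exact ⟨x, hx, le_refl x, hminx⟩
    · push_neg at hminx
      obtain ⟨z, hz, hzx, hne⟩ := hminx
      have hlt : (∑ i, z i) < n := by
        rw [← hsum]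
        apply Finset.sum_lt_sum (fun i _ => hzx i)
        obtain ⟨i, hi⟩ := Function.ne_iff.mp hne
        exact ⟨i, Finset.mem_univ i, lt_of_le_of_ne (hzx i) hi⟩
      obtain ⟨y, hy, hyz, hmin⟩ := ih _ hlt z hz rfl
      exact ⟨y, hy, le_trans hyz hzx, hmin⟩

lemma newton_vert (X : Set (Fin m → ℕ)) : newton (vert X) = newton X := by
  set M : Set (Fin m → ℕ) := {x ∈ X | ∀ z ∈ X, z ≤ x → z = x} with hMdef
  have hXM : X + (univ : Set (Fin m → ℕ)) = M + univ := by
    apply Subset.antisymm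
    · rintro - ⟨x, hx, a, -, rfl⟩
      obtain ⟨y, hy, hyx, hmin⟩ := exists_min X (∑ i, x i) x hx rfl
      refine ⟨y, ⟨hy, hmin⟩, (x - y) + a, mem_univ _, ?_⟩
      show y + (x - y + a) = x + a
      rw [← add_assoc]
      congr 1
      funext i
      exact Nat.add_sub_cancel' (hyx i)
    · exact Set.add_subset_add_right (fun y hy => hy.1)
  have hNM : newton X = newton M := by rw [newton, newton, hXM]
  have hanti : IsAntichain (· ≤ ·) M := fun a ha b hb hne hab => hne (hb.2 a ha.1 hab)
  have hfin : M.Finite := hanti.finite_of_partiallyWellOrderedOn (Set.isPWO_of_wellQuasiOrderedLE M)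
  have hF : (↑hfin.toFinset : Set (Fin m → ℕ)) = M := hfin.coe_toFinset
  calc newton (vert X) = newton (vert M) := by rw [vert_congr hNM]
    _ = newton M := by rw [← hF]; exact newton_vert_finset _
    _ = newton X := hNM.symm

lemma vert_empty : vert (∅ : Set (Fin m → ℕ)) = ∅ :=
  Subset.antisymm (vert_subset _) (empty_subset _)

lemma vert_vert (X : Set (Fin m → ℕ)) : vert (vert X) = vert X :=
  vert_congr (newton_vert X)

lemma newton_union_vert_left (A B : Set (Fin m → ℕ)) :
    newton (vert A ∪ B) = newton (A ∪ B) := by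
  rw [newton_union, newton_vert, ← newton_union]

lemma newton_union_vert_right (A B : Set (Fin m → ℕ)) :
    newton (A ∪ vert B) = newton (A ∪ B) := by
  rw [newton_union, newton_vert, ← newton_union]

lemma newton_add_vert_left (A B : Set (Fin m → ℕ)) :
    newton (vert A + B) = newton (A + B) := by
  rw [newton_addset, newton_vert, ← newton_addset]

lemma newton_add_vert_right (A B : Set (Fin m → ℕ)) :
    newton (A + vert B) = newton (A + B) := by
  rw [newton_addset, newton_vert, ← newton_addset]

lemma vert_singleton_zero : vert ({0} : Set (Fin m → ℕ)) = {0} := by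
  apply Subset.antisymm (vert_subset _)
  intro y hy
  rw [mem_singleton_iff] at hy
  subst hy
  refine ⟨rfl, ?_⟩
  rw [Set.diff_self, newton_empty]
  exact notMem_empty _

/-- The set of vertex sets `𝕋[[t_1,…,t_m]]`, with `⊕` and `⊙`, is a commutative
idempotent semiring. -/
theorem vertexSets_comm_idem_semiring (m : ℕ) (hm : 1 ≤ m) :
    -- closure of the operations
    (∀ S T : Set (Fin m → ℕ), IsVertexSet S → IsVertexSet T → IsVertexSet (oplus S T)) ∧
    (∀ S T : Set (Fin m → ℕ), IsVertexSet S → IsVertexSet T → IsVertexSet (odot S T)) ∧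
    -- `⊕` is commutative and associative
    (∀ S T : Set (Fin m → ℕ), IsVertexSet S → IsVertexSet T → oplus S T = oplus T S) ∧
    (∀ S T U : Set (Fin m → ℕ), IsVertexSet S → IsVertexSet T → IsVertexSet U →
      oplus (oplus S T) U = oplus S (oplus T U)) ∧
    -- `⊙` is commutative and associative
    (∀ S T : Set (Fin m → ℕ), IsVertexSet S → IsVertexSet T → odot S T = odot T S) ∧
    (∀ S T U : Set (Fin m → ℕ), IsVertexSet S → IsVertexSet T → IsVertexSet U →
      odot (odot S T) U = odot S (odot T U)) ∧
    -- `⊙` distributes over `⊕`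
    (∀ S T U : Set (Fin m → ℕ), IsVertexSet S → IsVertexSet T → IsVertexSet U →
      odot S (oplus T U) = oplus (odot S T) (odot S U)) ∧
    -- `⊕` is idempotent
    (∀ S : Set (Fin m → ℕ), IsVertexSet S → oplus S S = S) ∧
    -- `∅` is neutral for `⊕`
    (IsVertexSet (∅ : Set (Fin m → ℕ)) ∧
      ∀ S : Set (Fin m → ℕ), IsVertexSet S → oplus ∅ S = S) ∧
    -- `∅` is absorbing for `⊙`
    (∀ S : Set (Fin m → ℕ), IsVertexSet S → odot ∅ S = ∅) ∧
    -- `{(0,…,0)}` is neutral for `⊙`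
    (IsVertexSet ({0} : Set (Fin m → ℕ)) ∧
      ∀ S : Set (Fin m → ℕ), IsVertexSet S → odot {0} S = S) := by
  refine ⟨?_, ?_, ?_, ?_, ?_, ?_, ?_, ?_, ⟨?_, ?_⟩, ?_, ⟨?_, ?_⟩⟩
  · intro S T _ _
    exact vert_vert (S ∪ T)
  · intro S T _ _
    exact vert_vert (S + T)
  · intro S T _ _
    show vert (S ∪ T) = vert (T ∪ S)
    rw [Set.union_comm]
  · intro S T U _ _ _
    show vert (vert (S ∪ T) ∪ U) = vert (S ∪ vert (T ∪ U))
    apply vert_congr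
    rw [newton_union_vert_left, newton_union_vert_right, union_assoc]
  · intro S T _ _
    show vert (S + T) = vert (T + S)
    rw [add_comm]
  · intro S T U _ _ _
    show vert (vert (S + T) + U) = vert (S + vert (T + U))
    apply vert_congr
    rw [newton_add_vert_left, newton_add_vert_right, add_assoc]
  · intro S T U _ _ _
    show vert (S + vert (T ∪ U)) = vert (vert (S + T) ∪ vert (S + U))
    apply vert_congr
    rw [newton_add_vert_right, newton_union_vert_left, newton_union_vert_right,
      Set.add_union]
  · intro S hS
    show vert (S ∪ S) = S
    rw [union_self]
    exact hS
  · exact vert_empty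
  · intro S hS
    show vert (∅ ∪ S) = S
    rw [empty_union]
    exact hS
  · intro S _
    show vert (∅ + S) = ∅
    rw [Set.empty_add]
    exact vert_empty
  · exact vert_singleton_zero
  · intro S hS
    show vert ({0} + S) = S
    have h0 : ({0} : Set (Fin m → ℕ)) + S = S := by
      simp [Set.singleton_add]
    rw [h0]
    exact hS

end
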